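/- Let n ≥ 3, let J : ℝ^{2n} → ℝ^{2n} be J(h,v) = (0,h), let ξ be a linear form on ℝ^{2n} vanishing on the vertical subspace {0}×ℝ^n, and define the vector-valued 2-form K(x,y) = ξ(x) J(y) − ξ(y) J(x). Then for every alternating bilinear form ω on ℝ^{2n} satisfying ω(Jx,y) + ω(x,Jy) = 0 for all x,y, the trilinear alternating form i_K ω(x,y,z) := ω(K(x,y),z) + ω(K(z,x),y) + ω(K(y,z),x) vanishes identically. -/
import Mathlib


theorem stmt_12 (n : ℕ) (hn : 3 ≤ n)
    (J : ((Fin n → ℝ) × (Fin n → ℝ)) → ((Fin n → ℝ) × (Fin n → ℝ)))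
    (hJ : ∀ p : (Fin n → ℝ) × (Fin n → ℝ), J p = (0, p.1))
    (ξ : ((Fin n → ℝ) × (Fin n → ℝ)) →ₗ[ℝ] ℝ)
    (hξ : ∀ v : Fin n → ℝ, ξ (0, v) = 0)
    (K : ((Fin n → ℝ) × (Fin n → ℝ)) → ((Fin n → ℝ) × (Fin n → ℝ)) →
      ((Fin n → ℝ) × (Fin n → ℝ)))
    (hK : ∀ x y, K x y = ξ x • J y - ξ y • J x) :
    ∀ ω : ((Fin n → ℝ) × (Fin n → ℝ)) →ₗ[ℝ] ((Fin n → ℝ) × (Fin n → ℝ)) →ₗ[ℝ] ℝ,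
      (∀ x, ω x x = 0) → (∀ x y, ω (J x) y + ω x (J y) = 0) →
      ∀ x y z, ω (K x y) z + ω (K z x) y + ω (K y z) x = 0 := by
  intro ω halt hJω x y z
  have skew : ∀ a b, ω a b = -ω b a := by
    intro a b
    have h := halt (a + b)
    simp only [map_add, LinearMap.add_apply, halt a, halt b] at h
    linarith
  have key : ∀ a b, ω (J a) b = ω (J b) a := by
    intro a b
    have h1 := hJω a b
    have h2 := skew a (J b)
    linarith
  simp only [hK, map_sub, map_smul, LinearMap.sub_apply, LinearMap.smul_apply,
    smul_eq_mul]
  rw [key y z, key x z, key x y]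
  ring
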